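/- Let σ be a permutation of size n and (D,w) = ψ_FV^0(σ) its image under the type-0 Françon–Viennot map. Then GC^0(σ) = GC^0(D,w), Rec(σ) = DC^0(D,w), and tot(σ) = tw(D,w). -/

import Mathlib

open scoped Classical
noncomputable section

/-- Value of `σ` at the 1-indexed position `j`, with the convention that positions
outside `[1,n]` (in particular positions `0` and `n+1`) carry the value `0`. -/
def pval (n : ℕ) (σ : Equiv.Perm (Fin n)) (j : ℕ) : ℕ :=
  if h : 1 ≤ j ∧ j ≤ n then ((σ ⟨j - 1, by omega⟩ : Fin n) : ℕ) + 1 else 0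
/-- The (1-indexed) position of a value `v ∈ [1,n]` in `σ`. -/
def ppos (n : ℕ) (σ : Equiv.Perm (Fin n)) (v : ℕ) : ℕ :=
  if h : 1 ≤ v ∧ v ≤ n then ((σ.symm ⟨v - 1, by omega⟩ : Fin n) : ℕ) + 1 else 0
/-- Number of 31-2 patterns of `σ`. -/
def tot (n : ℕ) (σ : Equiv.Perm (Fin n)) : ℕ :=
  ((Finset.Icc 1 n ×ˢ Finset.Icc 1 n).filter (fun p =>
    p.1 + 1 < p.2 ∧ pval n σ (p.1 + 1) < pval n σ p.2 ∧ pval n σ p.2 < pval n σ p.1)).card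
/-- Number of 31-2 patterns of `σ` in which the value `k` plays the role of the `2`. -/
def totk (n : ℕ) (σ : Equiv.Perm (Fin n)) (k : ℕ) : ℕ :=
  ((Finset.Icc 1 n ×ˢ Finset.Icc 1 n).filter (fun p =>
    p.1 + 1 < p.2 ∧ pval n σ (p.1 + 1) < pval n σ p.2 ∧ pval n σ p.2 < pval n σ p.1 ∧
      pval n σ p.2 = k)).card
/-- The set of recoils of `σ`: values `i` such that `i+1` is to the left of `i`. -/
def recSet (n : ℕ) (σ : Equiv.Perm (Fin n)) : Finset ℕ :=
  (Finset.Ico 1 n).filter (fun i => ppos n σ (i + 1) < ppos n σ i)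
/-- The Genocchi descent set of type 0 (convention `σ_{n+1} = 0`). -/
def gdes0Set (n : ℕ) (σ : Equiv.Perm (Fin n)) : Finset ℕ :=
  (Finset.Icc 1 n).filter (fun v => pval n σ (ppos n σ v + 1) < v)
/-- Descent set of the Genocchi composition of descents of type 0, `GC⁰(σ)`. -/
def gc0Set (n : ℕ) (σ : Equiv.Perm (Fin n)) : Finset ℕ :=
  (gdes0Set n σ).erase n

/-! ### Compositions -/
/-- Total weight of a weighted Dyck path. -/
def twW (n : ℕ) (w : ℕ → ℕ) : ℕ := ∑ i ∈ Finset.Icc 1 n, w i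
/-- Genocchi descent set of type 0 of a weighted Dyck path. -/
def gdes0SetW (n : ℕ) (D : ℕ → Bool) : Finset ℕ :=
  (Finset.Ico 1 n).filter (fun i => D (2 * i) = false)
/-- Descent set of type 0 of a weighted Dyck path. -/
def dc0SetW (n : ℕ) (D : ℕ → Bool) (w : ℕ → ℕ) : Finset ℕ :=
  (Finset.Ico 1 n).filter (fun i =>
    w (i + 1) < w i ∨ (w i = w (i + 1) ∧ D (2 * i + 1) = true))

/-! ### The Françon–Viennot bijection -/
/-- The Dyck path of the type-0 Françon–Viennot map (conventions `σ_0 = σ_{n+1} = 0`):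
the Françon–Viennot rules applied to the values `1, …, n-1`, an up-step prepended and a
down-step appended. -/
def fv0Path (n : ℕ) (σ : Equiv.Perm (Fin n)) : ℕ → Bool := fun m =>
  if m = 0 ∨ 2 * n < m then false
  else if m = 1 then true
  else if m = 2 * n then false
  else
    if (m - 1) % 2 = 1 then
      if pval n σ (ppos n σ (m / 2)) < pval n σ (ppos n σ (m / 2) + 1)
        then true else false
    else
      if pval n σ (ppos n σ ((m - 1) / 2) - 1) < pval n σ (ppos n σ ((m - 1) / 2))
        then false else true
/-- The weight of the type-0 Françon–Viennot map: `w k = tot_k σ` for `k ≤ n-1`,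
and a `0` appended at position `n`. -/
def fv0Weight (n : ℕ) (σ : Equiv.Perm (Fin n)) : ℕ → ℕ := fun k =>
  if 1 ≤ k ∧ k + 1 ≤ n then totk n σ k else 0

/-! ### The involution ψ on (weighted) Dyck paths -/

namespace FVaux

variable {n : ℕ} {σ : Equiv.Perm (Fin n)}

lemma pval_mem {j : ℕ} (h1 : 1 ≤ j) (h2 : j ≤ n) :
    1 ≤ pval n σ j ∧ pval n σ j ≤ n := by
  unfold pval; rw [dif_pos ⟨h1, h2⟩]
  refine ⟨by omega, ?_⟩
  have := (σ ⟨j - 1, by omega⟩).isLt; omega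

lemma pval_zero {j : ℕ} (h : ¬(1 ≤ j ∧ j ≤ n)) : pval n σ j = 0 := by
  unfold pval; rw [dif_neg h]

lemma pval_inj {j j' : ℕ} (h1 : 1 ≤ j) (h2 : j ≤ n) (h1' : 1 ≤ j') (h2' : j' ≤ n)
    (h : pval n σ j = pval n σ j') : j = j' := by
  unfold pval at h; rw [dif_pos ⟨h1, h2⟩, dif_pos ⟨h1', h2'⟩] at h
  have h2 := σ.injective (a₁ := ⟨j - 1, by omega⟩) (a₂ := ⟨j' - 1, by omega⟩)
    (Fin.ext (by omega))
  have := Fin.mk.injEq (j - 1) (by omega : j - 1 < n) (j' - 1) (by omega) ▸ h2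
  omega

lemma ppos_mem {k : ℕ} (h1 : 1 ≤ k) (h2 : k ≤ n) :
    1 ≤ ppos n σ k ∧ ppos n σ k ≤ n := by
  unfold ppos; rw [dif_pos ⟨h1, h2⟩]
  refine ⟨by omega, ?_⟩
  have := (σ.symm ⟨k - 1, by omega⟩).isLt; omega

lemma pval_ppos {k : ℕ} (h1 : 1 ≤ k) (h2 : k ≤ n) : pval n σ (ppos n σ k) = k := by
  unfold ppos; rw [dif_pos ⟨h1, h2⟩]
  set x : Fin n := σ.symm ⟨k - 1, by omega⟩ with hx
  have hxl := x.isLt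
  unfold pval; rw [dif_pos ⟨by omega, by omega⟩]
  simp only [Nat.add_sub_cancel, Fin.eta, hx, Equiv.apply_symm_apply]
  omega

lemma pval_ne {j k : ℕ} (h1 : 1 ≤ k) (h2 : k ≤ n) (h : j ≠ ppos n σ k) :
    pval n σ j ≠ k := by
  intro he
  by_cases hj : 1 ≤ j ∧ j ≤ n
  · have hm := ppos_mem (σ := σ) h1 h2
    exact h (pval_inj hj.1 hj.2 hm.1 hm.2 (by rw [he, pval_ppos h1 h2]))
  · rw [pval_zero hj] at he; omega

/-- Number of down-crossings of level `x - ½` among transitions `(a, a+1)`, `a ∈ [l, m]`. -/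
def crossC (n : ℕ) (σ : Equiv.Perm (Fin n)) (x l m : ℕ) : ℕ :=
  ((Finset.Icc l m).filter (fun a => x < pval n σ a ∧ pval n σ (a + 1) < x)).card

lemma crossC_split {x l m : ℕ} (hl : 1 ≤ l) (hm : l ≤ m + 1) :
    crossC n σ x 1 m = crossC n σ x 1 (l - 1) + crossC n σ x l m := by
  unfold crossC
  have hu : Finset.Icc 1 m = Finset.Icc 1 (l - 1) ∪ Finset.Icc l m := by
    ext a; simp only [Finset.mem_Icc, Finset.mem_union]; omega
  rw [hu, Finset.filter_union, Finset.card_union_of_disjoint]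
  apply Finset.disjoint_filter_filter
  rw [Finset.disjoint_left]
  intro a ha hb
  simp only [Finset.mem_Icc] at ha hb
  omega

lemma crossC_mono {x l m m' : ℕ} (h : m ≤ m') : crossC n σ x l m ≤ crossC n σ x l m' := by
  unfold crossC
  apply Finset.card_le_card
  intro a ha
  simp only [Finset.mem_filter, Finset.mem_Icc] at ha ⊢
  omega

lemma crossC_le {x y l m : ℕ}
    (H : ∀ a, l ≤ a → a ≤ m → x < pval n σ a → pval n σ (a + 1) < x →
      y < pval n σ a ∧ pval n σ (a + 1) < y) :
    crossC n σ x l m ≤ crossC n σ y l m := by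
  unfold crossC
  apply Finset.card_le_card
  intro a ha
  simp only [Finset.mem_filter, Finset.mem_Icc] at ha ⊢
  exact ⟨ha.1, H a ha.1.1 ha.1.2 ha.2.1 ha.2.2⟩

lemma crossC_zero {x l m : ℕ} (h : crossC n σ x l m = 0) :
    ∀ a, l ≤ a → a ≤ m → ¬(x < pval n σ a ∧ pval n σ (a + 1) < x) := by
  intro a h1 h2 hc
  have : a ∈ (Finset.Icc l m).filter (fun a => x < pval n σ a ∧ pval n σ (a + 1) < x) := by
    simp only [Finset.mem_filter, Finset.mem_Icc]; exact ⟨⟨h1, h2⟩, hc⟩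
  have := Finset.card_pos.mpr ⟨a, this⟩
  unfold crossC at h; omega

lemma propagate {x l m : ℕ} (hlm : l ≤ m + 1) (h0 : x < pval n σ l)
    (hnc : ∀ a, l ≤ a → a ≤ m → ¬(x < pval n σ a ∧ pval n σ (a + 1) < x))
    (hne : ∀ a, l + 1 ≤ a → a ≤ m + 1 → pval n σ a ≠ x) :
    x < pval n σ (m + 1) := by
  have key : ∀ j, l ≤ j → j ≤ m + 1 → x < pval n σ j := by
    intro j hj
    induction j, hj using Nat.le_induction with
    | base => intro _; exact h0
    | succ j hj ih =>
      intro hj1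
      have hx := ih (by omega)
      have h1 := hnc j hj (by omega)
      have h2 := hne (j + 1) (by omega) (by omega)
      omega
  exact key (m + 1) hlm le_rfl

lemma pval_eq_iff {j k : ℕ} (h1 : 1 ≤ k) (h2 : k ≤ n) :
    pval n σ j = k ↔ j = ppos n σ k := by
  constructor
  · intro h; by_contra hne; exact pval_ne h1 h2 hne h
  · rintro rfl; exact pval_ppos h1 h2

lemma totk_eq {k : ℕ} (h1 : 1 ≤ k) (h2 : k ≤ n) :
    totk n σ k = crossC n σ k 1 (ppos n σ k - 2) := by
  have hp := ppos_mem (σ := σ) h1 h2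
  unfold totk crossC
  refine Finset.card_bij' (fun p _ => p.1) (fun a _ => (a, ppos n σ k)) ?_ ?_ ?_ ?_
  · intro p hp'
    simp only [Finset.mem_filter, Finset.mem_product, Finset.mem_Icc] at hp' ⊢
    obtain ⟨⟨⟨ha1, ha2⟩, hb⟩, hlt, hv1, hv2, hv3⟩ := hp'
    have h2' : p.2 = ppos n σ k := (pval_eq_iff h1 h2).mp hv3
    rw [h2'] at hlt
    rw [hv3] at hv1 hv2
    exact ⟨⟨ha1, by omega⟩, hv2, hv1⟩
  · intro a ha
    simp only [Finset.mem_filter, Finset.mem_Icc, Finset.mem_product] at ha ⊢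
    obtain ⟨⟨ha1, ha2⟩, hv1, hv2⟩ := ha
    have hk := pval_ppos (σ := σ) h1 h2
    exact ⟨⟨⟨ha1, by omega⟩, ⟨hp.1, hp.2⟩⟩, by omega, by rw [hk]; exact hv2,
      by rw [hk]; exact hv1, hk⟩
  · intro p hp'
    simp only [Finset.mem_filter, Finset.mem_product, Finset.mem_Icc] at hp'
    have h2' : p.2 = ppos n σ k := (pval_eq_iff h1 h2).mp hp'.2.2.2.2
    exact Prod.ext rfl h2'.symm
  · intro a _; rfl

lemma crossC_zero_of {x l m : ℕ}
    (h : ∀ a, l ≤ a → a ≤ m → ¬(x < pval n σ a ∧ pval n σ (a + 1) < x)) :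
    crossC n σ x l m = 0 := by
  unfold crossC
  rw [Finset.card_eq_zero, Finset.filter_eq_empty_iff]
  intro a ha
  simp only [Finset.mem_Icc] at ha
  exact h a ha.1 ha.2

/-- The recoil case: `i+1` is to the left of `i`. -/
lemma recoil_case {i : ℕ} (h1 : 1 ≤ i) (h2 : i + 1 ≤ n)
    (hqp : ppos n σ (i + 1) < ppos n σ i) :
    totk n σ (i + 1) ≤ totk n σ i ∧
      (totk n σ i = totk n σ (i + 1) → i < pval n σ (ppos n σ i - 1)) := by
  have hpm := ppos_mem (σ := σ) h1 (by omega)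
  have hqm := ppos_mem (σ := σ) (by omega : 1 ≤ i + 1) h2
  have hvp : pval n σ (ppos n σ i) = i := pval_ppos h1 (by omega)
  have hvq : pval n σ (ppos n σ (i + 1)) = i + 1 := pval_ppos (by omega) h2
  have hti : totk n σ i = crossC n σ i 1 ((ppos n σ i) - 2) := totk_eq h1 (by omega)
  have hti1 : totk n σ (i + 1) = crossC n σ (i + 1) 1 ((ppos n σ (i + 1)) - 2) := totk_eq (by omega) h2
  have s1 : crossC n σ (i + 1) 1 ((ppos n σ (i + 1)) - 2) ≤ crossC n σ (i + 1) 1 ((ppos n σ i) - 2) :=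
    crossC_mono (by omega)
  have s2 : crossC n σ (i + 1) 1 ((ppos n σ i) - 2) ≤ crossC n σ i 1 ((ppos n σ i) - 2) := by
    apply crossC_le
    intro a ha1 ha2 hxa hxa1
    have hne : pval n σ (a + 1) ≠ i := pval_ne h1 (by omega) (by omega)
    omega
  refine ⟨by omega, ?_⟩
  intro heq
  -- split at (ppos n σ (i + 1))
  have hsplit : crossC n σ i 1 ((ppos n σ i) - 2) = crossC n σ i 1 ((ppos n σ (i + 1)) - 1) + crossC n σ i (ppos n σ (i + 1)) ((ppos n σ i) - 2) :=
    crossC_split hqm.1 (by omega)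
  have e1 : crossC n σ i 1 ((ppos n σ (i + 1)) - 2) ≤ crossC n σ i 1 ((ppos n σ (i + 1)) - 1) :=
    crossC_mono (by omega)
  have e2 : crossC n σ (i + 1) 1 ((ppos n σ (i + 1)) - 2) ≤ crossC n σ i 1 ((ppos n σ (i + 1)) - 2) := by
    apply crossC_le
    intro a ha1 ha2 hxa hxa1
    have hne : pval n σ (a + 1) ≠ i := pval_ne h1 (by omega) (by omega)
    omega
  -- hence no i-down-crossings in [(ppos n σ (i + 1)), (ppos n σ i)-2]
  have hz : crossC n σ i (ppos n σ (i + 1)) ((ppos n σ i) - 2) = 0 := by omega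
  -- propagate positivity of (value > i) from position (ppos n σ (i + 1)) to (ppos n σ i)-1
  have hprop : i < pval n σ ((ppos n σ i) - 2 + 1) := by
    apply propagate (by omega) (by rw [hvq]; omega) (crossC_zero hz)
    intro a ha1 ha2
    exact pval_ne h1 (by omega) (by omega)
  have e : (ppos n σ i) - 2 + 1 = (ppos n σ i) - 1 := by omega
  rwa [e] at hprop

/-- The non-recoil case: `i` is to the left of `i+1`. -/
lemma norecoil_case {i : ℕ} (h1 : 1 ≤ i) (h2 : i + 1 ≤ n)
    (hpq : ppos n σ i < ppos n σ (i + 1)) :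
    totk n σ i ≤ totk n σ (i + 1) ∧
      (totk n σ i = totk n σ (i + 1) → pval n σ (ppos n σ i - 1) < i) := by
  have hpm := ppos_mem (σ := σ) h1 (by omega)
  have hqm := ppos_mem (σ := σ) (by omega : 1 ≤ i + 1) h2
  have hvp : pval n σ (ppos n σ i) = i := pval_ppos h1 (by omega)
  have hvq : pval n σ (ppos n σ (i + 1)) = i + 1 := pval_ppos (by omega) h2
  have hti : totk n σ i = crossC n σ i 1 ((ppos n σ i) - 2) := totk_eq h1 (by omega)
  have hti1 : totk n σ (i + 1) = crossC n σ (i + 1) 1 ((ppos n σ (i + 1)) - 2) := totk_eq (by omega) h2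
  have s1 : crossC n σ i 1 ((ppos n σ i) - 2) ≤ crossC n σ i 1 ((ppos n σ (i + 1)) - 2) := crossC_mono (by omega)
  have s2 : crossC n σ i 1 ((ppos n σ (i + 1)) - 2) ≤ crossC n σ (i + 1) 1 ((ppos n σ (i + 1)) - 2) := by
    apply crossC_le
    intro a ha1 ha2 hxa hxa1
    have hne : pval n σ a ≠ i + 1 := pval_ne (by omega) h2 (by omega)
    omega
  refine ⟨by omega, ?_⟩
  intro heq
  by_contra hge
  -- then pval ((ppos n σ i)-1) > i (it cannot equal i)
  have hne : pval n σ ((ppos n σ i) - 1) ≠ i := by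
    rcases Nat.lt_or_ge (ppos n σ i) 2 with hps | hps
    · have : (ppos n σ i) = 1 := by omega
      rw [this]
      rw [pval_zero (by omega)]
      omega
    · exact pval_ne h1 (by omega) (by omega)
  have hgt : i < pval n σ ((ppos n σ i) - 1) := by omega
  have hp1 : 1 ≤ (ppos n σ i) - 1 := by
    by_contra hc
    have : (ppos n σ i) = 1 := by omega
    rw [this] at hgt
    rw [pval_zero (by omega)] at hgt
    omega
  -- extra (i+1)-down-crossing at a = (ppos n σ i)-1
  have hone : 1 ≤ crossC n σ (i + 1) ((ppos n σ i) - 1) ((ppos n σ (i + 1)) - 2) := by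
    rw [Nat.one_le_iff_ne_zero, ← Nat.pos_iff_ne_zero]
    apply Finset.card_pos.mpr
    refine ⟨(ppos n σ i) - 1, ?_⟩
    simp only [Finset.mem_filter, Finset.mem_Icc]
    have e : (ppos n σ i) - 1 + 1 = (ppos n σ i) := by omega
    have hnq : pval n σ ((ppos n σ i) - 1) ≠ i + 1 := pval_ne (by omega) h2 (by omega)
    exact ⟨⟨le_rfl, by omega⟩, by omega, by rw [e, hvp]; omega⟩
  have hs : crossC n σ (i + 1) 1 ((ppos n σ (i + 1)) - 2)
      = crossC n σ (i + 1) 1 ((ppos n σ i) - 2) + crossC n σ (i + 1) ((ppos n σ i) - 1) ((ppos n σ (i + 1)) - 2) := by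
    have := crossC_split (n := n) (σ := σ) (x := i + 1) (l := (ppos n σ i) - 1) (m := (ppos n σ (i + 1)) - 2)
      (by omega) (by omega)
    have e : (ppos n σ i) - 1 - 1 = (ppos n σ i) - 2 := by omega
    rwa [e] at this
  have hle : crossC n σ i 1 ((ppos n σ i) - 2) ≤ crossC n σ (i + 1) 1 ((ppos n σ i) - 2) := by
    apply crossC_le
    intro a ha1 ha2 hxa hxa1
    have hne2 : pval n σ a ≠ i + 1 := pval_ne (by omega) h2 (by omega)
    omega
  omega

lemma rec_iff {i : ℕ} (h1 : 1 ≤ i) (h2 : i + 1 ≤ n) :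
    ppos n σ (i + 1) < ppos n σ i ↔
      (totk n σ (i + 1) < totk n σ i ∨
        (totk n σ i = totk n σ (i + 1) ∧ i < pval n σ (ppos n σ i - 1))) := by
  have hpm := ppos_mem (σ := σ) h1 (by omega)
  have hqm := ppos_mem (σ := σ) (by omega : 1 ≤ i + 1) h2
  have hvp : pval n σ (ppos n σ i) = i := pval_ppos h1 (by omega)
  have hvq : pval n σ (ppos n σ (i + 1)) = i + 1 := pval_ppos (by omega) h2
  have hne : ppos n σ (i + 1) ≠ ppos n σ i := by
    intro h; rw [h, hvp] at hvq; omega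
  constructor
  · intro hqp
    obtain ⟨hle, heqi⟩ := recoil_case h1 h2 hqp
    rcases Nat.lt_or_ge (totk n σ (i + 1)) (totk n σ i) with h | h
    · exact Or.inl h
    · have he : totk n σ i = totk n σ (i + 1) := by omega
      exact Or.inr ⟨he, heqi he⟩
  · intro hrhs
    by_contra hnot
    have hpq : ppos n σ i < ppos n σ (i + 1) := by omega
    obtain ⟨hle, heqi⟩ := norecoil_case h1 h2 hpq
    rcases hrhs with h | ⟨he, hgt⟩
    · omega
    · have := heqi he; omega

lemma fv0Path_even {i : ℕ} (h1 : 1 ≤ i) (h2 : i + 1 ≤ n) :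
    fv0Path n σ (2 * i) = (if i < pval n σ (ppos n σ i + 1) then true else false) := by
  unfold fv0Path
  rw [if_neg (by omega), if_neg (by omega), if_neg (by omega), if_pos (by omega)]
  have e : 2 * i / 2 = i := by omega
  rw [e, pval_ppos h1 (by omega)]

lemma fv0Path_odd {i : ℕ} (h1 : 1 ≤ i) (h2 : i + 1 ≤ n) :
    fv0Path n σ (2 * i + 1)
      = (if pval n σ (ppos n σ i - 1) < i then false else true) := by
  unfold fv0Path
  rw [if_neg (by omega), if_neg (by omega), if_neg (by omega), if_neg (by omega)]
  have e : (2 * i + 1 - 1) / 2 = i := by omega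
  rw [e, pval_ppos h1 (by omega)]

lemma totk_top : totk n σ n = 0 := by
  unfold totk
  rw [Finset.card_eq_zero, Finset.filter_eq_empty_iff]
  intro p hp
  simp only [Finset.mem_product, Finset.mem_Icc] at hp
  rintro ⟨hlt, hv1, hv2, hv3⟩
  have := pval_mem (σ := σ) hp.1.1 hp.1.2
  omega

end FVaux


/-- Proposition: for `(D, w) = ψ_FV⁰(σ)` (type-0 Françon–Viennot map) one has
`GC⁰ σ = GC⁰ (D,w)`, `Rec σ = DC⁰ (D,w)` and `tot σ = tw (D,w)` (compositions
identified with their descent sets). -/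
theorem stats_through_FV0 (n : ℕ) (σ : Equiv.Perm (Fin n)) :
    gc0Set n σ = gdes0SetW n (fv0Path n σ) ∧
    recSet n σ = dc0SetW n (fv0Path n σ) (fv0Weight n σ) ∧
    tot n σ = twW n (fv0Weight n σ) := by
  refine ⟨?_, ?_, ?_⟩
  · ext i
    simp only [gc0Set, gdes0Set, gdes0SetW, Finset.mem_erase, Finset.mem_filter,
      Finset.mem_Icc, Finset.mem_Ico]
    constructor
    · rintro ⟨hne, ⟨hi1, hi2⟩, hlt⟩
      have h2 : i + 1 ≤ n := by omega
      refine ⟨⟨hi1, by omega⟩, ?_⟩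
      rw [FVaux.fv0Path_even hi1 h2, if_neg (by omega)]
    · rintro ⟨⟨hi1, hi2⟩, hD⟩
      have h2 : i + 1 ≤ n := by omega
      rw [FVaux.fv0Path_even hi1 h2] at hD
      have hlt : ¬ i < pval n σ (ppos n σ i + 1) := by
        by_contra hc; rw [if_pos hc] at hD; simp at hD
      have hpm := FVaux.ppos_mem (σ := σ) hi1 (by omega)
      have hne : pval n σ (ppos n σ i + 1) ≠ i := FVaux.pval_ne hi1 (by omega) (by omega)
      exact ⟨by omega, ⟨hi1, by omega⟩, by omega⟩
  · ext i
    simp only [recSet, dc0SetW, Finset.mem_filter, Finset.mem_Ico]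
    refine and_congr_right ?_
    rintro ⟨hi1, hi2⟩
    have h2 : i + 1 ≤ n := by omega
    have hpm := FVaux.ppos_mem (σ := σ) hi1 (by omega)
    have hw1 : fv0Weight n σ i = totk n σ i := by
      simp only [fv0Weight]; rw [if_pos ⟨hi1, h2⟩]
    have hw2 : fv0Weight n σ (i + 1) = totk n σ (i + 1) := by
      by_cases hc : i + 2 ≤ n
      · simp only [fv0Weight]; rw [if_pos ⟨by omega, hc⟩]
      · have he : i + 1 = n := by omega
        simp only [fv0Weight]; rw [if_neg (by omega), he, FVaux.totk_top]
    have hvne : pval n σ (ppos n σ i - 1) ≠ i := by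
      rcases Nat.lt_or_ge (ppos n σ i) 2 with hps | hps
      · have : ppos n σ i - 1 = 0 := by omega
        rw [this, FVaux.pval_zero (by omega)]; omega
      · exact FVaux.pval_ne hi1 (by omega) (by omega)
    rw [hw1, hw2, FVaux.fv0Path_odd hi1 h2, FVaux.rec_iff hi1 h2]
    constructor
    · rintro (h | ⟨he, hgt⟩)
      · exact Or.inl h
      · exact Or.inr ⟨he, by rw [if_neg (by omega)]⟩
    · rintro (h | ⟨he, hD⟩)
      · exact Or.inl h
      · refine Or.inr ⟨he, ?_⟩
        by_contra hc
        rw [if_pos (by omega)] at hD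
        simp at hD
  · unfold tot twW
    rw [Finset.card_eq_sum_card_fiberwise
      (f := fun p => pval n σ p.2) (t := Finset.Icc 1 n) ?_]
    · apply Finset.sum_congr rfl
      intro k hk
      simp only [Finset.mem_Icc] at hk
      rw [Finset.filter_filter]
      by_cases hc : k + 1 ≤ n
      · have hw : fv0Weight n σ k = totk n σ k := by
          simp only [fv0Weight]; rw [if_pos ⟨hk.1, hc⟩]
        rw [hw]
        unfold totk
        congr 1
        apply Finset.filter_congr
        intro p _
        constructor
        · rintro ⟨⟨a, b, c⟩, d⟩; exact ⟨a, b, c, d⟩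
        · rintro ⟨a, b, c, d⟩; exact ⟨⟨a, b, c⟩, d⟩
      · have hw : fv0Weight n σ k = 0 := by
          simp only [fv0Weight]; rw [if_neg (by omega)]
        rw [hw, Finset.card_eq_zero, Finset.filter_eq_empty_iff]
        intro p hp
        simp only [Finset.mem_product, Finset.mem_Icc] at hp
        rintro ⟨⟨hlt, hv1, hv2⟩, hv3⟩
        have := FVaux.pval_mem (σ := σ) hp.1.1 hp.1.2
        omega
    · intro p hp
      simp only [Finset.mem_coe, Finset.mem_filter, Finset.mem_product, Finset.mem_Icc] at hp
      have := FVaux.pval_mem (σ := σ) hp.1.2.1 hp.1.2.2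
      simp only [Finset.mem_coe, Finset.mem_Icc]
      exact this
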